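/- Under the hypotheses of the mixture system (classical solutions ρ^i > 0, v^i of ρ^i_t + (ρ^i v^i)_x = 0 and q^i_t + (p_i(ρ^i) + ρ^i (v^i)²)_x = −(θ/2) ρ^i v^i|v^i| − Ω ρ^i u^i with q^i = ρ^i v^i, p_i'(r) = r P_i''(r)), the barycentric velocity v satisfies v_t + v v_x + Σ_i (ρ^i/ρ) P_i''(ρ^i) ρ^i_x = (1/ρ)( −Σ_i (ρ^i (u^i)²)_x − Σ_i (θ/2) ρ^i v^i |v^i| ), where u^i = v^i − v and ρ = Σ ρ^i. -/

import Mathlib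

/-- equation for the barycentric velocity. For classical solutions
(ρ^i, q^i) of the mixture system ρ^i_t + q^i_x = 0,
q^i_t + (p_i(ρ^i) + ρ^i(v^i)²)_x = −(θ/2)ρ^i v^i|v^i| − Ω ρ^i u^i
with q^i = ρ^i v^i and p_i'(r) = r P_i''(r), the barycentric velocity
v = (Σ ρ^j v^j)/ρ satisfies
v_t + v v_x + Σ (ρ^i/ρ) P_i''(ρ^i) ρ^i_x
  = (1/ρ)(−Σ (ρ^i (u^i)²)_x − Σ (θ/2) ρ^i v^i |v^i|),
where u^i = v^i − v and ρ = Σ ρ^i. -/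
theorem barycentric_velocity_equation
    (n : ℕ) (T L θ Ω : ℝ) (hT : 0 < T) (hL : 0 < L) (hθ : 0 < θ)
    (ρ q ρt ρx qt qx Fx Dux : Fin n → ℝ → ℝ → ℝ)
    (p Ppp : Fin n → ℝ → ℝ) (Vt Vx : ℝ → ℝ → ℝ)
    (hρpos : ∀ i t x, 0 < ρ i t x)
    -- time and space derivatives of the densities and flow rates
    (hρt : ∀ i, ∀ t ∈ Set.Icc (0:ℝ) T, ∀ x ∈ Set.Icc (0:ℝ) L,
      HasDerivAt (fun s => ρ i s x) (ρt i t x) t)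
    (hρx : ∀ i, ∀ t ∈ Set.Icc (0:ℝ) T, ∀ x ∈ Set.Icc (0:ℝ) L,
      HasDerivAt (fun y => ρ i t y) (ρx i t x) x)
    (hqt : ∀ i, ∀ t ∈ Set.Icc (0:ℝ) T, ∀ x ∈ Set.Icc (0:ℝ) L,
      HasDerivAt (fun s => q i s x) (qt i t x) t)
    (hqx : ∀ i, ∀ t ∈ Set.Icc (0:ℝ) T, ∀ x ∈ Set.Icc (0:ℝ) L,
      HasDerivAt (fun y => q i t y) (qx i t x) x)
    -- continuity equations ρ^i_t + q^i_x = 0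
    (hcont : ∀ i, ∀ t ∈ Set.Icc (0:ℝ) T, ∀ x ∈ Set.Icc (0:ℝ) L,
      ρt i t x + qx i t x = 0)
    -- chain rule for the pressure with p_i'(r) = r P_i''(r)
    (hpx : ∀ i, ∀ t ∈ Set.Icc (0:ℝ) T, ∀ x ∈ Set.Icc (0:ℝ) L,
      HasDerivAt (fun y => p i (ρ i t y))
        (ρ i t x * Ppp i (ρ i t x) * ρx i t x) x)
    -- space derivative of the momentum flux p_i(ρ^i) + ρ^i (v^i)²
    (hFx : ∀ i, ∀ t ∈ Set.Icc (0:ℝ) T, ∀ x ∈ Set.Icc (0:ℝ) L,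
      HasDerivAt (fun y => p i (ρ i t y) + ρ i t y * (q i t y / ρ i t y) ^ 2)
        (Fx i t x) x)
    -- momentum equations q^i_t + (p_i(ρ^i) + ρ^i(v^i)²)_x = −(θ/2)ρ^i v^i|v^i| − Ω ρ^i u^i
    (hmom : ∀ i, ∀ t ∈ Set.Icc (0:ℝ) T, ∀ x ∈ Set.Icc (0:ℝ) L,
      qt i t x + Fx i t x
        = -(θ/2) * ρ i t x * (q i t x / ρ i t x) * |q i t x / ρ i t x|
          - Ω * ρ i t x * (q i t x / ρ i t x
              - (∑ j, q j t x) / (∑ j, ρ j t x)))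
    -- derivatives of the barycentric velocity v = (Σ q^j)/(Σ ρ^j)
    (hVt : ∀ t ∈ Set.Icc (0:ℝ) T, ∀ x ∈ Set.Icc (0:ℝ) L,
      HasDerivAt (fun s => (∑ j, q j s x) / (∑ j, ρ j s x)) (Vt t x) t)
    (hVx : ∀ t ∈ Set.Icc (0:ℝ) T, ∀ x ∈ Set.Icc (0:ℝ) L,
      HasDerivAt (fun y => (∑ j, q j t y) / (∑ j, ρ j t y)) (Vx t x) x)
    -- space derivatives of ρ^i (u^i)² with u^i = v^i − v
    (hDux : ∀ i, ∀ t ∈ Set.Icc (0:ℝ) T, ∀ x ∈ Set.Icc (0:ℝ) L,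
      HasDerivAt (fun y => ρ i t y
        * (q i t y / ρ i t y - (∑ j, q j t y) / (∑ j, ρ j t y)) ^ 2)
        (Dux i t x) x) :
    -- conclusion
    ∀ t ∈ Set.Icc (0:ℝ) T, ∀ x ∈ Set.Icc (0:ℝ) L,
      Vt t x + ((∑ j, q j t x) / (∑ j, ρ j t x)) * Vx t x
          + ∑ i, (ρ i t x / ∑ j, ρ j t x) * Ppp i (ρ i t x) * ρx i t x
        = (1 / ∑ j, ρ j t x)
            * (-(∑ i, Dux i t x)
              - ∑ i, (θ/2) * ρ i t x * (q i t x / ρ i t x)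
                  * |q i t x / ρ i t x|) := by

  intro t ht x hx
  rcases Nat.eq_zero_or_pos n with hn | hn
  · subst hn
    have he : ∀ y : ℝ, (fun s : ℝ => (∑ j : Fin 0, q j s y) / (∑ j : Fin 0, ρ j s y))
        = fun _ => (0:ℝ) := by
      intro y; funext s; simp
    have hVt0 : Vt t x = 0 := by
      have h := hVt t ht x hx
      rw [he x] at h
      exact h.unique (hasDerivAt_const _ _)
    have hVx0 : Vx t x = 0 := by
      have h := hVx t ht x hx
      have he' : (fun y : ℝ => (∑ j : Fin 0, q j t y) / (∑ j : Fin 0, ρ j t y))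
          = fun _ => (0:ℝ) := by funext s; simp
      rw [he'] at h
      exact h.unique (hasDerivAt_const _ _)
    simp [hVt0, hVx0]
  · haveI : Nonempty (Fin n) := Fin.pos_iff_nonempty.mp hn
    have hRpos : 0 < ∑ j, ρ j t x :=
      Finset.sum_pos (fun i _ => hρpos i t x) Finset.univ_nonempty
    have hRne : (∑ j, ρ j t x) ≠ 0 := hRpos.ne'
    have hρne : ∀ i, ρ i t x ≠ 0 := fun i => (hρpos i t x).ne'
    -- derivatives of sums
    have hQt' : HasDerivAt (fun s => ∑ j, q j s x) (∑ j, qt j t x) t :=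
      HasDerivAt.fun_sum fun i _ => hqt i t ht x hx
    have hRt' : HasDerivAt (fun s => ∑ j, ρ j s x) (∑ j, ρt j t x) t :=
      HasDerivAt.fun_sum fun i _ => hρt i t ht x hx
    have hQx' : HasDerivAt (fun y => ∑ j, q j t y) (∑ j, qx j t x) x :=
      HasDerivAt.fun_sum fun i _ => hqx i t ht x hx
    have hRx' : HasDerivAt (fun y => ∑ j, ρ j t y) (∑ j, ρx j t x) x :=
      HasDerivAt.fun_sum fun i _ => hρx i t ht x hx
    have hVt2 : Vt t x = ((∑ j, qt j t x) * (∑ j, ρ j t x)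
        - (∑ j, q j t x) * (∑ j, ρt j t x)) / (∑ j, ρ j t x) ^ 2 :=
      (hVt t ht x hx).unique (hQt'.div hRt' hRne)
    have hVx2 : Vx t x = ((∑ j, qx j t x) * (∑ j, ρ j t x)
        - (∑ j, q j t x) * (∑ j, ρx j t x)) / (∑ j, ρ j t x) ^ 2 :=
      (hVx t ht x hx).unique (hQx'.div hRx' hRne)
    -- velocity derivative per species
    have hvx : ∀ i, HasDerivAt (fun y => q i t y / ρ i t y)
        ((qx i t x * ρ i t x - q i t x * ρx i t x) / ρ i t x ^ 2) x :=
      fun i => (hqx i t ht x hx).div (hρx i t ht x hx) (hρne i)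
    -- clean form of Fx
    have hFeq : ∀ i, Fx i t x = ρ i t x * Ppp i (ρ i t x) * ρx i t x
        + 2 * (q i t x / ρ i t x) * qx i t x
        - (q i t x / ρ i t x) ^ 2 * ρx i t x := by
      intro i
      have h2 := (hpx i t ht x hx).add
        ((hρx i t ht x hx).mul ((hvx i).fun_pow 2))
      have h3 := (hFx i t ht x hx).unique h2
      rw [h3]
      have := hρne i
      rw [show (2:ℕ) - 1 = 1 from rfl, pow_one]
      field_simp
      ring
    -- clean form of Dux
    have hDeq : ∀ i, Dux i t x
        = (Fx i t x - ρ i t x * Ppp i (ρ i t x) * ρx i t x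
            - 2 * ((∑ j, q j t x) / (∑ j, ρ j t x)) * qx i t x
            + ((∑ j, q j t x) / (∑ j, ρ j t x)) ^ 2 * ρx i t x)
          - 2 * (((∑ j, qx j t x) * (∑ j, ρ j t x)
                - (∑ j, q j t x) * (∑ j, ρx j t x)) / (∑ j, ρ j t x) ^ 2)
              * (q i t x - ρ i t x * ((∑ j, q j t x) / (∑ j, ρ j t x))) := by
      intro i
      have hu := (hvx i).fun_sub (hQx'.fun_div hRx' hRne)
      have h2 := (hρx i t ht x hx).mul (hu.fun_pow 2)
      have h3 := (hDux i t ht x hx).unique h2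
      rw [h3, hFeq i]
      have := hρne i
      rw [show (2:ℕ) - 1 = 1 from rfl, pow_one]
      field_simp
      ring
    -- sum of ρ u vanishes
    have hSQ : ∑ i, (q i t x - ρ i t x * ((∑ j, q j t x) / (∑ j, ρ j t x))) = 0 := by
      rw [Finset.sum_sub_distrib, ← Finset.sum_mul]
      field_simp
      simp
    -- momentum equation rewritten
    have hqteq : ∀ i, qt i t x = -Fx i t x
        - (θ/2) * ρ i t x * (q i t x / ρ i t x) * |q i t x / ρ i t x|
        - Ω * (q i t x - ρ i t x * ((∑ j, q j t x) / (∑ j, ρ j t x))) := by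
      intro i
      have h := hmom i t ht x hx
      have key : ρ i t x * (q i t x / ρ i t x - (∑ j, q j t x) / (∑ j, ρ j t x))
          = q i t x - ρ i t x * ((∑ j, q j t x) / (∑ j, ρ j t x)) := by
        have := hρne i
        field_simp
      linear_combination h - Ω * key
    have hQtval : ∑ j, qt j t x
        = -(∑ i, Fx i t x)
          - (∑ i, (θ/2) * ρ i t x * (q i t x / ρ i t x) * |q i t x / ρ i t x|) := by
      rw [Finset.sum_congr rfl fun i _ => hqteq i]
      rw [Finset.sum_sub_distrib, Finset.sum_sub_distrib, Finset.sum_neg_distrib,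
        ← Finset.mul_sum, hSQ]
      ring
    have hRtval : ∑ j, ρt j t x = -(∑ j, qx j t x) := by
      rw [← Finset.sum_neg_distrib]
      exact Finset.sum_congr rfl fun i _ => by linarith [hcont i t ht x hx]
    have hDsum : ∑ i, Dux i t x
        = (∑ i, Fx i t x) - (∑ i, ρ i t x * Ppp i (ρ i t x) * ρx i t x)
          - 2 * ((∑ j, q j t x) / (∑ j, ρ j t x)) * (∑ i, qx i t x)
          + ((∑ j, q j t x) / (∑ j, ρ j t x)) ^ 2 * (∑ i, ρx i t x) := by
      rw [Finset.sum_congr rfl fun i _ => hDeq i]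
      rw [Finset.sum_sub_distrib, ← Finset.mul_sum, hSQ]
      rw [Finset.sum_add_distrib, Finset.sum_sub_distrib, Finset.sum_sub_distrib,
        ← Finset.mul_sum, ← Finset.mul_sum]
      ring
    have hPsum : ∑ i, (ρ i t x / ∑ j, ρ j t x) * Ppp i (ρ i t x) * ρx i t x
        = (∑ i, ρ i t x * Ppp i (ρ i t x) * ρx i t x) / (∑ j, ρ j t x) := by
      rw [Finset.sum_div]
      exact Finset.sum_congr rfl fun i _ => by ring
    rw [hVt2, hVx2, hQtval, hRtval, hPsum, hDsum]
    field_simp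
    ring
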